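/- Fix r ∈ (0,1). The function g ↦ (1 − 2g(1−r))² − E(4g r²/(1+r⁴))² is strictly decreasing on [0,1/2). (This is the monogamy score M₁ = E_s² − E₁₂² − E₁₃² − E₂₃² of the non-generic GHZ-class state ψ(g₁,0,0,r): here E_s = 1 − 2g₁(1−r), E₁₂ = E₁₃ = 0 and E₂₃ = E(4g₁r²/(1+r⁴)).) -/
import Mathlib

private lemma div_le_div_of_le_left' {a b c : ℝ} (h : a ≤ b) (hc : 0 < c) :
    a / c ≤ b / c := by
  gcongr


/-- Binary Shannon entropy (base 2), with the convention `0 * log₂ 0 = 0`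
(automatic since `Real.logb 2 0 = 0`). -/
noncomputable def binEntropy (p : ℝ) : ℝ :=
  -p * Real.logb 2 p - (1 - p) * Real.logb 2 (1 - p)

/-- Entanglement-of-formation function of the concurrence `C`. -/
noncomputable def eof (C : ℝ) : ℝ :=
  binEntropy ((1 + Real.sqrt (1 - C ^ 2)) / 2)

lemma binEntropy_eq (p : ℝ) : binEntropy p = Real.binEntropy p / Real.log 2 := by
  simp only [binEntropy, Real.binEntropy, Real.logb, Real.log_inv]
  ring

lemma eof_nonneg {C : ℝ} (h0 : 0 ≤ C) (h1 : C ≤ 1) : 0 ≤ eof C := by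
  have hs0 : 0 ≤ Real.sqrt (1 - C ^ 2) := Real.sqrt_nonneg _
  have hs1 : Real.sqrt (1 - C ^ 2) ≤ 1 := by
    exact Real.sqrt_le_one.mpr (by nlinarith)
  rw [eof, binEntropy_eq]
  have := Real.binEntropy_nonneg (p := (1 + Real.sqrt (1 - C ^ 2)) / 2)
    (by linarith) (by linarith)
  positivity

lemma eof_mono {C D : ℝ} (h0 : 0 ≤ C) (hCD : C ≤ D) (h1 : D ≤ 1) : eof C ≤ eof D := by
  set sC := Real.sqrt (1 - C ^ 2) with hsC
  set sD := Real.sqrt (1 - D ^ 2) with hsD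
  have hsD0 : 0 ≤ sD := Real.sqrt_nonneg _
  have hsC1 : sC ≤ 1 := Real.sqrt_le_one.mpr (by nlinarith)
  have hle : sD ≤ sC := Real.sqrt_le_sqrt (by nlinarith)
  have hpC : (1 + sC) / 2 ∈ Set.Icc (2⁻¹ : ℝ) 1 := by
    constructor <;> [linarith [Real.sqrt_nonneg (1 - C ^ 2)]; linarith]
  have hpD : (1 + sD) / 2 ∈ Set.Icc (2⁻¹ : ℝ) 1 := by
    constructor <;> [linarith; linarith [hle.trans hsC1]]
  have := Real.binEntropy_strictAntiOn.antitoneOn hpD hpC (by linarith)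
  rw [eof, eof, binEntropy_eq, binEntropy_eq]
  have hlog : (0:ℝ) < Real.log 2 := Real.log_pos (by norm_num)
  exact div_le_div_of_le_left' this hlog

/-- For fixed `r ∈ (0,1)`, the monogamy score
`g ↦ (1 - 2g(1-r))² - E(4gr²/(1+r⁴))²` of the non-generic GHZ-class state
`ψ(g,0,0,r)` is strictly decreasing on `[0,1/2)`. -/
theorem monogamy_score_strictAnti (r : ℝ) (hr : r ∈ Set.Ioo (0 : ℝ) 1) :
    StrictAntiOn
      (fun g : ℝ => (1 - 2 * g * (1 - r)) ^ 2 - (eof (4 * g * r ^ 2 / (1 + r ^ 4))) ^ 2)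
      (Set.Ico (0 : ℝ) (1 / 2)) := by
  obtain ⟨hr0, hr1⟩ := hr
  intro a ha b hb hab
  obtain ⟨ha0, ha1⟩ := ha
  obtain ⟨hb0, hb1⟩ := hb
  have hden : (0:ℝ) < 1 + r ^ 4 := by positivity
  set ca := 4 * a * r ^ 2 / (1 + r ^ 4) with hca
  set cb := 4 * b * r ^ 2 / (1 + r ^ 4) with hcb
  have hca0 : 0 ≤ ca := by positivity
  have hcab : ca ≤ cb := by
    apply div_le_div_of_le_left' (by nlinarith) hden
  have hcb1 : cb ≤ 1 := by
    rw [hcb, div_le_one hden]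
    nlinarith [sq_nonneg (1 - r ^ 2)]
  -- first term strictly decreasing
  have h1b : 0 ≤ 1 - 2 * b * (1 - r) := by nlinarith
  have h1 : (1 - 2 * b * (1 - r)) ^ 2 < (1 - 2 * a * (1 - r)) ^ 2 := by
    apply pow_lt_pow_left₀ (by nlinarith) h1b (by norm_num)
  -- second term nondecreasing
  have h2 : (eof ca) ^ 2 ≤ (eof cb) ^ 2 :=
    pow_le_pow_left₀ (eof_nonneg hca0 (hcab.trans hcb1))
      (eof_mono hca0 hcab hcb1) 2
  simp only
  linarith
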